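/- For all positive integers n, m and all integers r ≥ m+n, the r-th Mycielski graph M_r contains R_m(M_n) as an induced subgraph. -/

import Mathlib

open SimpleGraph

universe u
variable {V : Type u}

/-- Closed neighborhood of a vertex set. -/
def closedNbhd (G : SimpleGraph V) (U : Set V) : Set V :=
  U ∪ {v | ∃ u ∈ U, G.Adj u v}

/-- Bag `X_ℓ = N[{v_1,…,v_ℓ}] \ {v_1,…,v_{ℓ-1}}` of the enumeration `σ`. -/
def bagX {n : ℕ} (G : SimpleGraph V) (σ : Fin n ≃ V) (ℓ : Fin n) : Set V :=
  closedNbhd G {v | ∃ j ≤ ℓ, v = σ j} \ {v | ∃ j < ℓ, v = σ j}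

/-- Chromatic number of the subgraph induced by `S`. -/
noncomputable def chrom (G : SimpleGraph V) (S : Set V) : ℕ :=
  sInf {k | (G.induce S).Colorable k}

/-- Chromatic number of the path-decomposition `P_σ^G`. -/
noncomputable def decompChrom {n : ℕ} (G : SimpleGraph V) (σ : Fin n ≃ V) : ℕ :=
  sInf {k | ∀ ℓ, (G.induce (bagX G σ ℓ)).Colorable k}

/-- `B` is a path-decomposition of `G`. -/
def IsPathDecomp (G : SimpleGraph V) {s : ℕ} (B : Fin s → Set V) : Prop :=
  (∀ v, ∃ t, v ∈ B t) ∧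
  (∀ u v, G.Adj u v → ∃ t, u ∈ B t ∧ v ∈ B t) ∧
  (∀ v (t₁ t₂ t₃ : Fin s), t₁ ≤ t₂ → t₂ ≤ t₃ → v ∈ B t₁ → v ∈ B t₃ → v ∈ B t₂)

/-- Path-chromatic number. -/
noncomputable def pathChromatic (G : SimpleGraph V) : ℕ :=
  sInf {k | ∃ (s : ℕ) (B : Fin s → Set V), IsPathDecomp G B ∧
    ∀ t, (G.induce (B t)).Colorable k}

/-- `(T, B)` is a tree-decomposition of `G`. -/
def IsTreeDecomp {ι : Type u} (G : SimpleGraph V) (T : SimpleGraph ι) (B : ι → Set V) : Prop :=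
  T.IsTree ∧
  (∀ v, ∃ t, v ∈ B t) ∧
  (∀ u v, G.Adj u v → ∃ t, u ∈ B t ∧ v ∈ B t) ∧
  (∀ v, (T.induce {t | v ∈ B t}).Connected)

/-- Tree-chromatic number. -/
noncomputable def treeChromatic (G : SimpleGraph V) : ℕ :=
  sInf {k | ∃ (ι : Type u) (T : SimpleGraph ι) (B : ι → Set V),
    IsTreeDecomp G T B ∧ ∀ t, (G.induce (B t)).Colorable k}

/-- A special enumeration. -/
def IsSpecial {n : ℕ} (G : SimpleGraph V) (σ : Fin n ≃ V) : Prop :=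
  decompChrom G σ = pathChromatic G ∧
  ∀ i : Fin n, chrom G (bagX G σ i) = pathChromatic G →
    ∀ j : Fin n, j < i → ¬ G.Adj (σ j) (σ i)

/-- The graph `R_m(G)`; the vertex `(i, none)` plays the role of `(i, v₀)`. -/
def Rm (G : SimpleGraph V) (m : ℕ) : SimpleGraph (Fin m × Option V) :=
  SimpleGraph.fromRel (fun p q =>
    (p.1 = q.1 ∧ p.2 = none) ∨
    (p.1 ≠ q.1 ∧ ∃ u v, p.2 = some u ∧ q.2 = some v ∧ G.Adj u v))

/-- `[I, U] = { (i, v) : i ∈ I, v ∈ U }` inside `R_m(G)`. -/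
def box {m : ℕ} (I : Set (Fin m)) (U : Set V) : Set (Fin m × Option V) :=
  {p | p.1 ∈ I ∧ ∃ v ∈ U, p.2 = some v}

/-- Index of the first vertex in the enumeration `μ` satisfying `P`. -/
noncomputable def firstIdx {N : ℕ} {W : Type*} (μ : Fin N ≃ W) (P : W → Prop) : ℕ :=
  sInf {ℓ : ℕ | ∃ h : ℓ < N, P (μ ⟨ℓ, h⟩)}

/-- The cycle `C_n`: `v_j ~ v_{j'}` iff `|j - j'| ∈ {1, n-1}`. -/
def cyc (n : ℕ) : SimpleGraph (Fin n) :=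
  SimpleGraph.fromRel (fun a b => (b : ℕ) - (a : ℕ) = 1 ∨ (b : ℕ) - (a : ℕ) = n - 1)

/-- The Mycielskian of a graph. -/
def mycielskian (G : SimpleGraph V) : SimpleGraph (Option (V ⊕ V)) :=
  SimpleGraph.fromRel (fun a b =>
    match a, b with
    | some (Sum.inl u), some (Sum.inl v) => G.Adj u v
    | some (Sum.inr u), some (Sum.inl v) => G.Adj u v
    | none, some (Sum.inr _) => True
    | _, _ => False)

/-- Vertex types and graphs of the Mycielski family: `MycS 2` is a single edge. -/
def MycS : ℕ → Σ W : Type, SimpleGraph W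
  | 0 => ⟨Empty, ⊥⟩
  | 1 => ⟨Empty, ⊥⟩
  | 2 => ⟨Fin 2, ⊤⟩
  | (n + 3) => ⟨Option ((MycS (n + 2)).1 ⊕ (MycS (n + 2)).1), mycielskian (MycS (n + 2)).2⟩

/-- The vertex type of the `k`-Mycielski graph. -/
def MycV (k : ℕ) : Type := (MycS k).1

/-- The `k`-Mycielski graph `M_k`. -/
def Myc (k : ℕ) : SimpleGraph (MycV k) := (MycS k).2


section Aux
variable {G : SimpleGraph V}

@[simp] lemma mycAdj_inl_inl {u v : V} :
    (mycielskian G).Adj (some (Sum.inl u)) (some (Sum.inl v)) ↔ G.Adj u v := by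
  constructor
  · rintro ⟨-, h | h⟩; exact h; exact h.symm
  · intro h; exact ⟨by simp [h.ne], Or.inl h⟩

@[simp] lemma mycAdj_inl_inr {u v : V} :
    (mycielskian G).Adj (some (Sum.inl u)) (some (Sum.inr v)) ↔ G.Adj v u := by
  constructor
  · rintro ⟨-, h | h⟩; exact h.elim; exact h
  · intro h; exact ⟨by simp, Or.inr h⟩

@[simp] lemma mycAdj_inr_inl {u v : V} :
    (mycielskian G).Adj (some (Sum.inr u)) (some (Sum.inl v)) ↔ G.Adj u v := by
  constructor
  · rintro ⟨-, h | h⟩; exact h; exact h.elim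
  · intro h; exact ⟨by simp, Or.inl h⟩

@[simp] lemma mycAdj_inr_inr {u v : V} :
    ¬ (mycielskian G).Adj (some (Sum.inr u)) (some (Sum.inr v)) := by
  rintro ⟨-, h | h⟩ <;> exact h

@[simp] lemma mycAdj_none_inl {v : V} :
    ¬ (mycielskian G).Adj none (some (Sum.inl v)) := by
  rintro ⟨-, h | h⟩ <;> exact h

@[simp] lemma mycAdj_inl_none {v : V} :
    ¬ (mycielskian G).Adj (some (Sum.inl v)) none := by
  rintro ⟨-, h | h⟩ <;> exact h

@[simp] lemma mycAdj_none_inr {v : V} :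
    (mycielskian G).Adj none (some (Sum.inr v)) :=
  ⟨by simp, Or.inl trivial⟩

@[simp] lemma mycAdj_inr_none {v : V} :
    (mycielskian G).Adj (some (Sum.inr v)) none :=
  mycAdj_none_inr.symm

end Aux

section RmAux
variable {G : SimpleGraph V}

lemma Rm_adj_some_some {m : ℕ} (i j : Fin m) (u v : V) :
    (Rm G m).Adj (i, some u) (j, some v) ↔ i ≠ j ∧ G.Adj u v := by
  constructor
  · rintro ⟨hne, h | h⟩
    · rcases h with ⟨-, h⟩ | ⟨hij, a, b, ha, hb, hab⟩
      · exact absurd h (by simp)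
      · cases ha; cases hb; exact ⟨hij, hab⟩
    · rcases h with ⟨-, h⟩ | ⟨hij, a, b, ha, hb, hab⟩
      · exact absurd h (by simp)
      · cases ha; cases hb; exact ⟨fun e => hij e.symm, hab.symm⟩
  · rintro ⟨hij, h⟩
    exact ⟨by simp [hij], Or.inl (Or.inr ⟨hij, u, v, rfl, rfl, h⟩)⟩

lemma Rm_adj_none_some {m : ℕ} (i j : Fin m) (v : V) :
    (Rm G m).Adj (i, none) (j, some v) ↔ i = j := by
  constructor
  · rintro ⟨hne, h | h⟩
    · rcases h with ⟨hij, -⟩ | ⟨-, a, b, ha, -⟩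
      · exact hij
      · exact absurd ha (by simp)
    · rcases h with ⟨hij, h⟩ | ⟨-, a, b, -, hb, -⟩
      · exact absurd h (by simp)
      · exact absurd hb (by simp)
  · rintro rfl
    exact ⟨by simp, Or.inl (Or.inl ⟨rfl, rfl⟩)⟩

lemma Rm_adj_some_none {m : ℕ} (i j : Fin m) (v : V) :
    (Rm G m).Adj (i, some v) (j, none) ↔ i = j := by
  rw [(Rm G m).adj_comm, Rm_adj_none_some]; exact eq_comm

lemma Rm_adj_none_none {m : ℕ} (i j : Fin m) :
    ¬ (Rm G m).Adj (i, none) (j, none) := by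
  rintro ⟨hne, h | h⟩
  · rcases h with ⟨hij, -⟩ | ⟨-, a, b, ha, -⟩
    · exact hne (Prod.ext hij rfl)
    · exact absurd ha (by simp)
  · rcases h with ⟨hij, -⟩ | ⟨-, a, b, ha, -⟩
    · exact hne (Prod.ext hij.symm rfl)
    · exact absurd ha (by simp)

end RmAux

def IterV (V : Type u) : ℕ → Type u
  | 0 => V
  | k+1 => Option (IterV V k ⊕ IterV V k)

def IterG (G : SimpleGraph V) : (k : ℕ) → SimpleGraph (IterV V k)
  | 0 => G
  | k+1 => mycielskian (IterG G k)

def ιv (V : Type u) : (k : ℕ) → V → IterV V k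
  | 0, v => v
  | k+1, v => some (Sum.inl (ιv V k v))

lemma ιv_inj (V : Type u) : ∀ k, Function.Injective (ιv V k)
  | 0 => fun _ _ h => h
  | k+1 => fun a b h => by
      exact ιv_inj V k (Sum.inl.inj (Option.some.inj h))

lemma ιv_adj (G : SimpleGraph V) : ∀ (k : ℕ) (u v : V),
    (IterG G k).Adj (ιv V k u) (ιv V k v) ↔ G.Adj u v
  | 0, u, v => Iff.rfl
  | k+1, u, v => by
      show (mycielskian (IterG G k)).Adj (some (Sum.inl _)) (some (Sum.inl _)) ↔ _
      rw [mycAdj_inl_inl]; exact ιv_adj G k u v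

def Remb (V : Type u) : (m : ℕ) → Fin m × Option V → IterV V m
  | 0, p => p.1.elim0
  | m+1, (i, x) =>
    if h : (i : ℕ) < m then some (Sum.inl (Remb V m (⟨i, h⟩, x)))
    else match x with
      | none => none
      | some v => some (Sum.inr (ιv V m v))

lemma Remb_old {m : ℕ} (i : ℕ) (hi : i < m) (him : i < m+1) (x : Option V) :
    Remb V (m+1) (⟨i, him⟩, x) = some (Sum.inl (Remb V m (⟨i, hi⟩, x))) := by
  simp [Remb, hi]
  rfl

lemma Remb_new_none {m : ℕ} (hm : m < m+1) :
    Remb V (m+1) ((⟨m, hm⟩ : Fin (m+1)), (none : Option V)) = none := by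
  simp [Remb]
  rfl

lemma Remb_new_some {m : ℕ} (hm : m < m+1) (v : V) :
    Remb V (m+1) ((⟨m, hm⟩ : Fin (m+1)), some v) = some (Sum.inr (ιv V m v)) := by
  simp [Remb]
  rfl

lemma Remb_adj_ιv (G : SimpleGraph V) : ∀ (m : ℕ) (v : V) (p : Fin m × Option V),
    (IterG G m).Adj (ιv V m v) (Remb V m p) ↔ ∃ u, p.2 = some u ∧ G.Adj v u
  | 0, v, p => p.1.elim0
  | m+1, v, (⟨i, him⟩, x) => by
    by_cases h : i < m
    · rw [Remb_old i h him x]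
      show (mycielskian (IterG G m)).Adj (some (Sum.inl _)) (some (Sum.inl _)) ↔ _
      rw [mycAdj_inl_inl]
      exact Remb_adj_ιv G m v (⟨i, h⟩, x)
    · obtain rfl : i = m := by omega
      cases x with
      | none =>
          rw [Remb_new_none]
          show (mycielskian _).Adj (some (Sum.inl _)) none ↔ _
          simp
      | some u =>
          rw [Remb_new_some]
          show (mycielskian (IterG G i)).Adj (some (Sum.inl _)) (some (Sum.inr _)) ↔ _
          rw [mycAdj_inl_inr, ιv_adj]
          constructor
          · intro h; exact ⟨u, rfl, h.symm⟩
          · rintro ⟨u', hu, h⟩; cases hu; exact h.symm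

lemma Remb_inj (V : Type u) : ∀ m, Function.Injective (Remb V m)
  | 0 => fun p => p.1.elim0
  | m+1 => by
    rintro ⟨⟨i, him⟩, x⟩ ⟨⟨j, hjm⟩, y⟩ h
    by_cases hi : i < m <;> by_cases hj : j < m
    · rw [Remb_old i hi him x, Remb_old j hj hjm y] at h
      have h' := Remb_inj V m (Sum.inl.inj (Option.some.inj h))
      have h1 : i = j := congrArg (fun p => (p.1 : ℕ)) h'
      have h2 : x = y := congrArg Prod.snd h'
      subst h1; subst h2; rfl
    · obtain rfl : j = m := by omega
      rw [Remb_old i hi him x] at h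
      cases y with
      | none => rw [Remb_new_none] at h; cases h
      | some v => rw [Remb_new_some] at h; cases h
    · obtain rfl : i = m := by omega
      rw [Remb_old j hj hjm y] at h
      cases x with
      | none => rw [Remb_new_none] at h; cases h
      | some v => rw [Remb_new_some] at h; cases h
    · obtain rfl : i = m := by omega
      obtain rfl : i = j := by omega
      cases x <;> cases y
      · rfl
      · rename_i v
        rw [Remb_new_none, Remb_new_some] at h; cases h
      · rename_i v
        rw [Remb_new_some, Remb_new_none] at h; cases h
      · rename_i u v
        rw [Remb_new_some, Remb_new_some] at h
        have := ιv_inj V i (Sum.inr.inj (Option.some.inj h))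
        subst this; rfl

lemma Remb_adj_mixed (G : SimpleGraph V) (m : ℕ) (i : ℕ) (hi : i < m) (him : i < m+1)
    (hm : m < m+1) (x y : Option V) :
    (IterG G (m+1)).Adj (Remb V (m+1) (⟨i, him⟩, x)) (Remb V (m+1) (⟨m, hm⟩, y)) ↔
      (Rm G (m+1)).Adj (⟨i, him⟩, x) (⟨m, hm⟩, y) := by
  rw [Remb_old i hi him x]
  cases y with
  | none =>
      rw [Remb_new_none]
      have hL : ¬ (IterG G (m+1)).Adj (some (Sum.inl (Remb V m (⟨i, hi⟩, x)))) none :=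
        mycAdj_inl_none
      rw [iff_false_intro hL, false_iff]
      cases x with
      | none => exact Rm_adj_none_none _ _
      | some u =>
          rw [Rm_adj_some_none]
          intro he
          exact absurd (congrArg Fin.val he) hi.ne
  | some v =>
      rw [Remb_new_some]
      show (mycielskian (IterG G m)).Adj (some (Sum.inl _)) (some (Sum.inr _)) ↔ _
      rw [mycAdj_inl_inr, Remb_adj_ιv]
      cases x with
      | none =>
          rw [Rm_adj_none_some]
          constructor
          · rintro ⟨u, hu, -⟩; cases hu
          · intro he; exact absurd (congrArg Fin.val he) hi.ne
      | some u =>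
          rw [Rm_adj_some_some]
          constructor
          · rintro ⟨u', hu, h⟩; cases hu
            exact ⟨fun he => absurd (congrArg Fin.val he) hi.ne, h.symm⟩
          · rintro ⟨-, h⟩; exact ⟨u, rfl, h.symm⟩

lemma Remb_adj (G : SimpleGraph V) : ∀ (m : ℕ) (p q : Fin m × Option V),
    (IterG G m).Adj (Remb V m p) (Remb V m q) ↔ (Rm G m).Adj p q
  | 0, p, q => p.1.elim0
  | m+1, (⟨i, him⟩, x), (⟨j, hjm⟩, y) => by
    by_cases hi : i < m <;> by_cases hj : j < m
    · rw [Remb_old i hi him x, Remb_old j hj hjm y]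
      show (mycielskian (IterG G m)).Adj (some (Sum.inl _)) (some (Sum.inl _)) ↔ _
      rw [mycAdj_inl_inl, Remb_adj G m]
      cases x <;> cases y
      · simp [Rm_adj_none_none]
      · simp [Rm_adj_none_some, Fin.ext_iff]
      · simp [Rm_adj_some_none, Fin.ext_iff]
      · simp [Rm_adj_some_some, Fin.ext_iff]
    · obtain rfl : j = m := by omega
      exact Remb_adj_mixed G j i hi him hjm x y
    · obtain rfl : i = m := by omega
      rw [(IterG G (i+1)).adj_comm, (Rm G (i+1)).adj_comm]
      exact Remb_adj_mixed G i j hj hjm him y x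
    · obtain rfl : i = m := by omega
      obtain rfl : i = j := by omega
      cases x <;> cases y
      · rw [Remb_new_none]
        have hL : ¬ (IterG G (i+1)).Adj (none : IterV V (i+1)) none := (IterG G (i+1)).loopless.irrefl _
        rw [iff_false_intro hL, false_iff]
        exact Rm_adj_none_none _ _
      · rename_i v
        rw [Remb_new_none, Remb_new_some]
        have hT : (IterG G (i+1)).Adj none (some (Sum.inr (ιv V i v))) := mycAdj_none_inr
        rw [iff_true_intro hT, Rm_adj_none_some, true_iff]
      · rename_i v
        rw [Remb_new_some, Remb_new_none]
        have hT : (IterG G (i+1)).Adj (some (Sum.inr (ιv V i v))) none := mycAdj_inr_none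
        rw [iff_true_intro hT, Rm_adj_some_none, true_iff]
      · rename_i u v
        rw [Remb_new_some, Remb_new_some]
        have hL : ¬ (IterG G (i+1)).Adj (some (Sum.inr (ιv V i u)))
            (some (Sum.inr (ιv V i v))) := mycAdj_inr_inr
        rw [iff_false_intro hL, false_iff, Rm_adj_some_some]
        rintro ⟨hne, -⟩; exact hne rfl

/-- The embedding `R_m(G) ↪g M^m(G)`. -/
def RembEmb (G : SimpleGraph V) (m : ℕ) : Rm G m ↪g IterG G m :=
  ⟨⟨Remb V m, Remb_inj V m⟩, fun {p q} => Remb_adj G m p q⟩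

/-- `mycielskian` respects isomorphisms. -/
def mycCongr {W : Type v} {G : SimpleGraph V} {H : SimpleGraph W} (e : G ≃g H) :
    mycielskian G ≃g mycielskian H where
  toEquiv := (Equiv.sumCongr e.toEquiv e.toEquiv).optionCongr
  map_rel_iff' := by
    rintro (_ | (a | a)) (_ | (b | b)) <;>
      simp only [Equiv.optionCongr_apply, Option.map_none, Option.map_some,
        Equiv.sumCongr_apply, Sum.map_inl, Sum.map_inr]
    · exact iff_of_false ((mycielskian H).loopless.irrefl _) ((mycielskian G).loopless.irrefl _)
    · constructor <;> intro h <;> exact absurd h mycAdj_none_inl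
    · exact iff_of_true mycAdj_none_inr mycAdj_none_inr
    · constructor <;> intro h <;> exact absurd h mycAdj_inl_none
    · rw [mycAdj_inl_inl, mycAdj_inl_inl]; exact e.map_rel_iff
    · rw [mycAdj_inl_inr, mycAdj_inl_inr]; exact e.map_rel_iff
    · exact iff_of_true mycAdj_inr_none mycAdj_inr_none
    · rw [mycAdj_inr_inl, mycAdj_inr_inl]; exact e.map_rel_iff
    · constructor <;> intro h <;> exact absurd h mycAdj_inr_inr

/-- Cast between equal Mycielski indices. -/
def mycCast {a b : ℕ} (h : a = b) : Myc a ≃g Myc b := by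
  subst h; exact RelIso.refl _

/-- `M^k(M_{n+2}) ≅ M_{n+2+k}`. -/
def mycSuccIso (j : ℕ) : mycielskian (Myc (j+2)) ≃g Myc (j+3) := RelIso.refl _

def iterIso (n : ℕ) : ∀ k : ℕ, IterG (Myc (n+2)) k ≃g Myc (n+2+k)
  | 0 => RelIso.refl _
  | k+1 =>
    ((mycCongr ((iterIso n k).trans (mycCast (show n+2+k = n+k+2 by omega)))).trans
      (mycSuccIso (n+k))).trans (mycCast (show n+k+3 = n+2+(k+1) by omega))

/-- `G ↪g mycielskian G`. -/
def mycInlEmb (G : SimpleGraph V) : G ↪g mycielskian G :=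
  ⟨⟨fun v => some (Sum.inl v), fun a b h => Sum.inl.inj (Option.some.inj h)⟩,
    fun {a b} => mycAdj_inl_inl⟩

/-- `M_{j+2} ↪g M_{j+3}`. -/
def mycStep (j : ℕ) : Myc (j+2) ↪g Myc (j+3) := mycInlEmb (Myc (j+2))

/-- `M_{n+2} ↪g M_{n+2+k}`. -/
def mycGrow (n : ℕ) : ∀ k : ℕ, Myc (n+2) ↪g Myc (n+2+k)
  | 0 => SimpleGraph.Embedding.refl
  | k+1 =>
    (((mycGrow n k).trans (mycCast (show n+2+k = n+k+2 by omega)).toEmbedding).trans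
      (mycStep (n+k))).trans (mycCast (show n+k+3 = n+2+(k+1) by omega)).toEmbedding

def indep : (k : ℕ) → Fin (k+1) → MycV (k+2)
  | 0, _ => (0 : Fin 2)
  | k+1, i => if h : (i : ℕ) < k+1 then some (Sum.inl (indep k ⟨i, h⟩)) else none

lemma indep_lt {k : ℕ} (i : Fin (k+2)) (h : (i : ℕ) < k+1) :
    indep (k+1) i = some (Sum.inl (indep k ⟨i, h⟩)) := by simp [indep, h]; rfl

lemma indep_last {k : ℕ} (i : Fin (k+2)) (h : ¬ (i : ℕ) < k+1) :
    indep (k+1) i = none := by simp [indep, h]; rfl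

lemma indep_inj : ∀ k, Function.Injective (indep k)
  | 0 => fun a b _ => Fin.ext (by omega)
  | k+1 => by
      intro i j h
      by_cases hi : (i : ℕ) < k+1 <;> by_cases hj : (j : ℕ) < k+1
      · rw [indep_lt i hi, indep_lt j hj] at h
        have := congrArg Fin.val (indep_inj k (Sum.inl.inj (Option.some.inj h)))
        exact Fin.ext this
      · rw [indep_lt i hi, indep_last j hj] at h; cases h
      · rw [indep_last i hi, indep_lt j hj] at h; cases h
      · exact Fin.ext (by omega)

lemma indep_nonadj : ∀ (k : ℕ) (i j : Fin (k+1)), ¬ (Myc (k+2)).Adj (indep k i) (indep k j)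
  | 0, i, j => (Myc 2).loopless.irrefl _
  | k+1, i, j => by
      by_cases hi : (i : ℕ) < k+1 <;> by_cases hj : (j : ℕ) < k+1
      · rw [indep_lt i hi, indep_lt j hj]
        intro h
        exact indep_nonadj k _ _ (mycAdj_inl_inl.mp h)
      · rw [indep_lt i hi, indep_last j hj]; exact mycAdj_inl_none
      · rw [indep_last i hi, indep_lt j hj]; exact mycAdj_none_inl
      · rw [indep_last i hi, indep_last j hj]; exact (Myc (k+3)).loopless.irrefl _

lemma optMycV1_eq_none (x : Option (MycV 1)) : x = none := by
  cases x with
  | none => rfl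
  | some e => exact Empty.elim e

theorem stmt_16' (n m r : ℕ) (hn : 1 ≤ n) (hm : 1 ≤ m) (hr : m + n ≤ r) :
    Nonempty (Rm (Myc n) m ↪g Myc r) := by
  match n, hn with
  | 1, _ =>
    obtain ⟨r', rfl⟩ : ∃ r', r = r'+2 := ⟨r-2, by omega⟩
    have hmr : m ≤ r'+1 := by omega
    refine ⟨⟨⟨fun p => indep r' ⟨p.1, lt_of_lt_of_le p.1.isLt hmr⟩, ?_⟩, ?_⟩⟩
    · intro p q h
      have h1 := congrArg Fin.val (indep_inj r' h)
      have h2 : (p.1 : ℕ) = (q.1 : ℕ) := h1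
      exact Prod.ext (Fin.ext h2) ((optMycV1_eq_none p.2).trans (optMycV1_eq_none q.2).symm)
    · rintro ⟨i, x⟩ ⟨j, y⟩
      obtain rfl : x = none := optMycV1_eq_none x
      obtain rfl : y = none := optMycV1_eq_none y
      exact iff_of_false (indep_nonadj r' _ _) (Rm_adj_none_none i j)
  | (n'+2), _ =>
    obtain ⟨k, rfl⟩ : ∃ k, r = n'+2+m+k := ⟨r - (n'+2+m), by omega⟩
    exact ⟨(((RembEmb (Myc (n'+2)) m).trans (iterIso n' m).toEmbedding).trans
      (mycCast (show n'+2+m = (n'+m)+2 by omega)).toEmbedding).trans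
      ((mycGrow (n'+m) k).trans
        (mycCast (show (n'+m)+2+k = n'+2+m+k by omega)).toEmbedding)⟩

/-- Lemma 8: for positive `n, m` and `r ≥ m + n`, the Mycielski graph `M_r` contains
`R_m(M_n)` as an induced subgraph. -/
theorem stmt_16 (n m r : ℕ) (hn : 1 ≤ n) (hm : 1 ≤ m) (hr : m + n ≤ r) :
    Nonempty (Rm (Myc n) m ↪g Myc r) := stmt_16' n m r hn hm hr
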